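/- Let J be a set, let x_1, x_2, x_3 ∈ ℓ²(J), and let T_1, T_2, T_3 be the Varopoulos triple on H = ℂ ⊕ ℓ²(J) ⊕ ℂ. Then: (a) T_i T_j = T_j T_i for all i, j = 1, 2, 3; (b) for each i, T_i T_i* (c, v, d) = (0, ⟨v, x_i⟩·x_i, ‖x_i‖²·d), where ⟨·,·⟩ denotes the inner product of ℓ²(J) (conjugate-linear in the second argument); (c) the operator norm of T_i equals ‖x_i‖. -/

import Mathlib

noncomputable section

/-- The Hilbert space `ℂ ⊕₂ L ⊕₂ ℂ` on which the Varopoulos triple acts. -/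
abbrev VarSpace (L : Type*) [NormedAddCommGroup L] [InnerProductSpace ℂ L] : Type _ :=
  WithLp 2 (ℂ × WithLp 2 (L × ℂ))

variable {L : Type*} [NormedAddCommGroup L] [InnerProductSpace ℂ L]

/-- The identification of `VarSpace L` with `ℂ × L × ℂ` as a continuous linear equivalence. -/
def varEquiv (L : Type*) [NormedAddCommGroup L] [InnerProductSpace ℂ L] :
    VarSpace L ≃L[ℂ] ℂ × L × ℂ :=
  (WithLp.prodContinuousLinearEquiv 2 ℂ ℂ (WithLp 2 (L × ℂ))).trans
    ((ContinuousLinearEquiv.refl ℂ ℂ).prodCongr (WithLp.prodContinuousLinearEquiv 2 ℂ L ℂ))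

/-- The element `(c, v, d)` of `VarSpace L`. -/
def varMk (c : ℂ) (v : L) (d : ℂ) : VarSpace L := (varEquiv L).symm (c, v, d)

open ContinuousLinearMap in
/-- The Varopoulos operator `T (c, v, d) = (0, c • x, ⟪xbar, v⟫)` on `ℂ ⊕₂ L ⊕₂ ℂ`.
With `xbar` the entrywise conjugate of `x`, the third coordinate is the bilinear
pairing `Σ_α x(α) v(α)`. -/
def varOp (x xbar : L) : VarSpace L →L[ℂ] VarSpace L :=
  ((varEquiv L).symm : ℂ × L × ℂ →L[ℂ] VarSpace L) ∘L
    ((0 : ℂ × L × ℂ →L[ℂ] ℂ).prod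
      (((fst ℂ ℂ (L × ℂ)).smulRight x).prod
        ((innerSL ℂ xbar) ∘L (fst ℂ L ℂ) ∘L (snd ℂ ℂ (L × ℂ))))) ∘L
    ((varEquiv L) : VarSpace L →L[ℂ] ℂ × L × ℂ)

end

noncomputable section Aux

open ContinuousLinearMap ComplexConjugate

variable {L : Type*} [NormedAddCommGroup L] [InnerProductSpace ℂ L]

lemma varMk_eq (c : ℂ) (v : L) (d : ℂ) :
    varMk c v d = (WithLp.equiv 2 (ℂ × WithLp 2 (L × ℂ))).symm
      (c, (WithLp.equiv 2 (L × ℂ)).symm (v, d)) := rfl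

lemma varMk_fst (c : ℂ) (v : L) (d : ℂ) : (varMk c v d).fst = c := rfl
lemma varMk_snd_fst (c : ℂ) (v : L) (d : ℂ) : (varMk c v d).snd.fst = v := rfl
lemma varMk_snd_snd (c : ℂ) (v : L) (d : ℂ) : (varMk c v d).snd.snd = d := rfl

lemma norm_varMk_sq (c : ℂ) (v : L) (d : ℂ) :
    ‖varMk c v d‖ ^ 2 = ‖c‖ ^ 2 + ‖v‖ ^ 2 + ‖d‖ ^ 2 := by
  rw [WithLp.prod_norm_sq_eq_of_L2, WithLp.prod_norm_sq_eq_of_L2, varMk_fst]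
  rw [varMk_snd_fst (L := L) c v d, varMk_snd_snd (L := L) c v d]  -- maybe not needed
  ring

lemma inner_varMk (c : ℂ) (v : L) (d : ℂ) (c' : ℂ) (v' : L) (d' : ℂ) :
    (inner ℂ (varMk c v d) (varMk c' v' d') : ℂ)
      = conj c * c' + inner ℂ v v' + conj d * d' := by
  rw [WithLp.prod_inner_apply, WithLp.prod_inner_apply]
  change inner ℂ c c' + (inner ℂ v v' + inner ℂ d d') = _
  simp [RCLike.inner_apply]
  ring

lemma varOp_varMk (x xbar : L) (c : ℂ) (v : L) (d : ℂ) :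
    varOp x xbar (varMk c v d) = varMk 0 (c • x) (inner ℂ xbar v) := by
  simp [varOp, varMk, ContinuousLinearMap.prod_apply]

/-- The adjoint of the Varopoulos operator. -/
def varAdj (x xbar : L) : VarSpace L →L[ℂ] VarSpace L :=
  ((varEquiv L).symm : ℂ × L × ℂ →L[ℂ] VarSpace L) ∘L
    (((innerSL ℂ x) ∘L (fst ℂ L ℂ) ∘L (snd ℂ ℂ (L × ℂ))).prod
      ((((snd ℂ L ℂ) ∘L (snd ℂ ℂ (L × ℂ))).smulRight xbar).prod
        (0 : ℂ × L × ℂ →L[ℂ] ℂ))) ∘L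
    ((varEquiv L) : VarSpace L →L[ℂ] ℂ × L × ℂ)

lemma varAdj_varMk (x xbar : L) (c : ℂ) (v : L) (d : ℂ) :
    varAdj x xbar (varMk c v d) = varMk (inner ℂ x v) (d • xbar) 0 := by
  simp [varAdj, varMk, ContinuousLinearMap.prod_apply]

lemma varMk_surj (u : VarSpace L) : ∃ c v d, u = varMk c v d := by
  obtain ⟨⟨c, v, d⟩, rfl⟩ := (varEquiv L).symm.surjective u
  exact ⟨c, v, d, rfl⟩

lemma adjoint_varOp [CompleteSpace L] (x xbar : L) :
    ContinuousLinearMap.adjoint (varOp x xbar) = varAdj x xbar := by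
  symm
  rw [ContinuousLinearMap.eq_adjoint_iff]
  intro u w
  obtain ⟨a, b, e, rfl⟩ := varMk_surj u
  obtain ⟨c, v, d, rfl⟩ := varMk_surj w
  rw [varAdj_varMk, varOp_varMk, inner_varMk, inner_varMk]
  simp [inner_smul_left, inner_smul_right, ← inner_conj_symm v x]
  ring


lemma sq_norm_eq {a b : ℝ} (ha : 0 ≤ a) (hb : 0 ≤ b) (h : a ^ 2 = b ^ 2) : a = b := by
  rw [← Real.sqrt_sq ha, ← Real.sqrt_sq hb, h]

lemma inner_star_comm {J : Type*} (a b : lp (fun _ : J => ℂ) 2) :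
    (inner ℂ (star a) b : ℂ) = inner ℂ (star b) a := by
  rw [lp.inner_eq_tsum, lp.inner_eq_tsum]
  exact tsum_congr fun i => by simp [RCLike.inner_apply, mul_comm]

lemma norm_varOp {L : Type*} [NormedAddCommGroup L] [InnerProductSpace ℂ L]
    (x xbar : L) (h : ‖xbar‖ = ‖x‖) : ‖varOp x xbar‖ = ‖x‖ := by
  refine le_antisymm (ContinuousLinearMap.opNorm_le_bound _ (norm_nonneg _) fun u => ?_) ?_
  · obtain ⟨c, v, d, rfl⟩ := varMk_surj u
    rw [varOp_varMk]
    have h1 := norm_varMk_sq (0 : ℂ) (c • x) (inner ℂ xbar v : ℂ)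
    have h2 := norm_varMk_sq c v d
    have h3 : ‖(inner ℂ xbar v : ℂ)‖ ≤ ‖xbar‖ * ‖v‖ := norm_inner_le_norm xbar v
    rw [h] at h3
    have h4 : ‖c • x‖ = ‖c‖ * ‖x‖ := norm_smul c x
    have h5 : (0:ℝ) ≤ ‖varMk (0 : ℂ) (c • x) (inner ℂ xbar v : ℂ)‖ := norm_nonneg _
    have h6 : (0:ℝ) ≤ ‖varMk c v d‖ := norm_nonneg _
    have h7 : (0:ℝ) ≤ ‖x‖ := norm_nonneg _
    have h8 : (0:ℝ) ≤ ‖v‖ := norm_nonneg _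
    have h9 : (0:ℝ) ≤ ‖(inner ℂ xbar v : ℂ)‖ := norm_nonneg _
    have h10 : (0:ℝ) ≤ ‖d‖ := norm_nonneg _
    have h11 : (0:ℝ) ≤ ‖c‖ := norm_nonneg _
    simp only [norm_zero] at h1
    have h12 : ‖(inner ℂ xbar v : ℂ)‖ ^ 2 ≤ (‖x‖ * ‖v‖) ^ 2 := by
      rw [sq, sq]; exact mul_le_mul h3 h3 h9 (mul_nonneg h7 h8)
    have key : ‖varMk (0 : ℂ) (c • x) (inner ℂ xbar v : ℂ)‖ ^ 2
        ≤ (‖x‖ * ‖varMk c v d‖) ^ 2 := by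
      have h2' : (‖x‖ * ‖varMk c v d‖) ^ 2 = ‖x‖ ^ 2 * (‖c‖ ^ 2 + ‖v‖ ^ 2 + ‖d‖ ^ 2) := by
        rw [mul_pow, h2]
      rw [h1, h4, h2']
      nlinarith [h12, sq_nonneg (‖x‖ * ‖d‖)]
    calc ‖varMk (0 : ℂ) (c • x) (inner ℂ xbar v : ℂ)‖
        = Real.sqrt (‖varMk (0 : ℂ) (c • x) (inner ℂ xbar v : ℂ)‖ ^ 2) :=
          (Real.sqrt_sq h5).symm
      _ ≤ Real.sqrt ((‖x‖ * ‖varMk c v d‖) ^ 2) := Real.sqrt_le_sqrt key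
      _ = ‖x‖ * ‖varMk c v d‖ := Real.sqrt_sq (mul_nonneg h7 h6)
  · have e1 : ‖varMk (1 : ℂ) (0 : L) (0 : ℂ)‖ = 1 := by
      apply sq_norm_eq (norm_nonneg _) zero_le_one
      rw [norm_varMk_sq]; simp
    have e2 : varOp x xbar (varMk (1 : ℂ) (0 : L) (0 : ℂ)) = varMk 0 x 0 := by
      rw [varOp_varMk]; simp
    have e3 : ‖varMk (0 : ℂ) x (0 : ℂ)‖ = ‖x‖ := by
      apply sq_norm_eq (norm_nonneg _) (norm_nonneg _)
      rw [norm_varMk_sq]; simp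
    calc ‖x‖ = ‖varOp x xbar (varMk (1 : ℂ) (0 : L) (0 : ℂ))‖ := by rw [e2, e3]
    _ ≤ ‖varOp x xbar‖ * ‖varMk (1 : ℂ) (0 : L) (0 : ℂ)‖ := ContinuousLinearMap.le_opNorm _ _
    _ = ‖varOp x xbar‖ := by rw [e1, mul_one]

end Aux

open ContinuousLinearMap in
/-- Properties of the Varopoulos triple built from `x_1, x_2, x_3 ∈ ℓ²(J)`:
the operators commute, `T_i T_i* (c,v,d) = (0, ⟨v,x_i⟩ x_i, ‖x_i‖² d)`, and
`‖T_i‖ = ‖x_i‖`. -/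
theorem statement9 {J : Type*} (x : Fin 3 → lp (fun _ : J => ℂ) 2)
    (T : Fin 3 → VarSpace (lp (fun _ : J => ℂ) 2) →L[ℂ] VarSpace (lp (fun _ : J => ℂ) 2))
    (hT : ∀ i, T i = varOp (x i) (star (x i))) :
    (∀ i j, T i ∘L T j = T j ∘L T i) ∧
    (∀ (i : Fin 3) (c : ℂ) (v : lp (fun _ : J => ℂ) 2) (d : ℂ),
      (T i ∘L ContinuousLinearMap.adjoint (T i)) (varMk c v d)
        = varMk 0 ((inner ℂ (x i) v : ℂ) • x i) ((‖x i‖ : ℂ) ^ 2 * d)) ∧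
    (∀ i, ‖T i‖ = ‖x i‖) := by
  refine ⟨?_, ?_, ?_⟩
  · intro i j
    ext u
    obtain ⟨c, v, d, rfl⟩ := varMk_surj u
    simp only [ContinuousLinearMap.comp_apply, hT, varOp_varMk, zero_smul, inner_smul_right,
      inner_zero_right]
    rw [inner_star_comm (x i) (x j)]
  · intro i c v d
    rw [ContinuousLinearMap.comp_apply, hT, adjoint_varOp, varAdj_varMk, varOp_varMk,
      inner_smul_right, inner_self_eq_norm_sq_to_K, norm_star]
    exact congrArg _ (mul_comm _ _)
  · intro i
    rw [hT]
    exact norm_varOp _ _ (norm_star (x i))
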